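/- arXiv:0912.2444 — 4 statements merged into one kernel-verified Lean document; each statement's English description precedes it below -/
import Mathlib

section
/- Fix a real constant c > 0. For every N and every N_1, N_2 with 1 ≤ N_1, N_2 ≤ N − 1 and N_1 + N_2 = N, let M_1 be a Binomial(⌊cN⌋, N_1/N) random variable and M_2 = ⌊cN⌋ − M_1; conditionally on M_1, let G(N_1, M_1) and G(N_2, M_2) be independent Erdős–Rényi directed multigraphs on [N_1] and [N_2] with M_1 and M_2 edges respectively. Then E[I(G(N, ⌊cN⌋))] ≥ E[I(G(N_1, M_1))] + E[I(G(N_2, M_2))], where I(·) denotes the maximum cardinality of an independent set. -/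
open Filter
open scoped Classical

/-- Expectation of `f` when an edge list of `M` directed edges on vertex set `Fin N` is
drawn uniformly at random (i.e. the `M` edges are i.i.d. uniform ordered pairs). -/
noncomputable def expER (N M : ℕ) (f : (Fin M → Fin N × Fin N) → ℝ) : ℝ :=
  (∑ E : Fin M → Fin N × Fin N, f E) / (Fintype.card (Fin M → Fin N × Fin N) : ℝ)

/-- `S` is an independent set for the edge list `E`: no edge has both endpoints in `S`. -/
def IsIndepSet {N M : ℕ} (E : Fin M → Fin N × Fin N) (S : Finset (Fin N)) : Prop :=
  ∀ m : Fin M, ¬((E m).1 ∈ S ∧ (E m).2 ∈ S)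

/-- The maximum cardinality of an independent set of the edge list `E`. -/
noncomputable def maxIndepER {N M : ℕ} (E : Fin M → Fin N × Fin N) : ℕ :=
  Finset.sup ((Finset.univ : Finset (Finset (Fin N))).filter (IsIndepSet E)) Finset.card

/-- `P(Binomial(M, θ) = m)`. -/
noncomputable def binomW (M : ℕ) (θ : ℝ) (m : ℕ) : ℝ :=
  (M.choose m : ℝ) * θ ^ m * (1 - θ) ^ (M - m)

set_option linter.unusedSectionVars false
set_option maxHeartbeats 1000000

namespace InterpAux
open Finset

/-! ### Max independent set of a finite set of directed edges -/

variable {V : Type*} [Fintype V] [DecidableEq V]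

def indepE (A : Finset (V × V)) (S : Finset V) : Prop :=
  ∀ e ∈ A, ¬(e.1 ∈ S ∧ e.2 ∈ S)

noncomputable def misE (A : Finset (V × V)) : ℕ :=
  ((Finset.univ : Finset (Finset V)).filter (indepE A)).sup Finset.card

lemma indepE_empty (A : Finset (V × V)) : indepE A (∅ : Finset V) :=
  fun _ _ h => absurd h.1 (by simp)

lemma le_misE {A : Finset (V × V)} {S : Finset V} (h : indepE A S) : S.card ≤ misE A :=
  Finset.le_sup (by simp [h])

lemma misE_le {A : Finset (V × V)} {k : ℕ} (h : ∀ S, indepE A S → S.card ≤ k) :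
    misE A ≤ k :=
  Finset.sup_le fun S hS => h S (Finset.mem_filter.mp hS).2

lemma exists_max (A : Finset (V × V)) : ∃ S, indepE A S ∧ S.card = misE A := by
  have hne : ((Finset.univ : Finset (Finset V)).filter (indepE A)).Nonempty :=
    ⟨∅, by simp [indepE_empty]⟩
  obtain ⟨S, hS, hEq⟩ := Finset.exists_mem_eq_sup _ hne Finset.card
  exact ⟨S, (Finset.mem_filter.mp hS).2, hEq.symm⟩

lemma indepE_anti {A B : Finset (V × V)} {S : Finset V} (h : A ⊆ B) (hB : indepE B S) :
    indepE A S := fun e he => hB e (h he)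

lemma misE_anti {A B : Finset (V × V)} (h : A ⊆ B) : misE B ≤ misE A :=
  misE_le fun _ hS => le_misE (indepE_anti h hS)

noncomputable def coreE (A : Finset (V × V)) : Finset V :=
  Finset.univ.filter fun v => ∀ S, indepE A S → S.card = misE A → v ∈ S

lemma mem_coreE {A : Finset (V × V)} {v : V} :
    v ∈ coreE A ↔ ∀ S, indepE A S → S.card = misE A → v ∈ S := by
  simp [coreE]

lemma misE_insert_real (A : Finset (V × V)) (u v : V) :
    (misE (insert (u, v) A) : ℝ) =
      (misE A : ℝ) - (if u ∈ coreE A then (1:ℝ) else 0) * (if v ∈ coreE A then (1:ℝ) else 0) := by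
  have hmono : misE (insert (u, v) A) ≤ misE A := misE_anti (Finset.subset_insert _ _)
  by_cases hu : u ∈ coreE A
  · by_cases hv : v ∈ coreE A
    · obtain ⟨S, hS, hcard⟩ := exists_max A
      have huS : u ∈ S := mem_coreE.mp hu S hS hcard
      have h1 : misE A - 1 ≤ misE (insert (u, v) A) := by
        have hind : indepE (insert (u, v) A) (S.erase u) := by
          intro e he
          rcases Finset.mem_insert.mp he with h | h
          · subst h
            intro hcon
            exact (Finset.notMem_erase u S) hcon.1
          · intro hcon
            exact hS e h ⟨Finset.mem_of_mem_erase hcon.1, Finset.mem_of_mem_erase hcon.2⟩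
        have := le_misE hind
        rwa [Finset.card_erase_of_mem huS, hcard] at this
      have h2 : misE (insert (u, v) A) < misE A := by
        rcases lt_or_eq_of_le hmono with h | h
        · exact h
        · exfalso
          obtain ⟨S', hS', hcard'⟩ := exists_max (insert (u, v) A)
          have hSA : indepE A S' := indepE_anti (Finset.subset_insert _ _) hS'
          have hc : S'.card = misE A := by rw [hcard', h]
          have hu' : u ∈ S' := mem_coreE.mp hu S' hSA hc
          have hv' : v ∈ S' := mem_coreE.mp hv S' hSA hc
          exact hS' (u, v) (Finset.mem_insert_self _ _) ⟨hu', hv'⟩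
      have : misE (insert (u, v) A) + 1 = misE A := by omega
      simp only [hu, hv, if_true]
      push_cast [← this]
      ring
    · have : ∃ S, indepE A S ∧ S.card = misE A ∧ v ∉ S := by
        by_contra hcon
        push_neg at hcon
        exact hv (mem_coreE.mpr fun S hS hc => hcon S hS hc)
      obtain ⟨S, hS, hcard, hvS⟩ := this
      have hind : indepE (insert (u, v) A) S := by
        intro e he
        rcases Finset.mem_insert.mp he with h | h
        · subst h; exact fun hcon => hvS hcon.2
        · exact hS e h
      have := le_misE hind
      have heq : misE (insert (u, v) A) = misE A := le_antisymm hmono (hcard ▸ this)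
      simp [hv, heq]
  · have : ∃ S, indepE A S ∧ S.card = misE A ∧ u ∉ S := by
      by_contra hcon
      push_neg at hcon
      exact hu (mem_coreE.mpr fun S hS hc => hcon S hS hc)
    obtain ⟨S, hS, hcard, huS⟩ := this
    have hind : indepE (insert (u, v) A) S := by
      intro e he
      rcases Finset.mem_insert.mp he with h | h
      · subst h; exact fun hcon => huS hcon.1
      · exact hS e h
    have := le_misE hind
    have heq : misE (insert (u, v) A) = misE A := le_antisymm hmono (hcard ▸ this)
    simp [hu, heq]

/-! ### Bridge to `maxIndepER` -/

lemma maxIndepER_eq {N M : ℕ} (E : Fin M → Fin N × Fin N) :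
    maxIndepER E = misE (Finset.image E Finset.univ) := by
  have h : ∀ S : Finset (Fin N), IsIndepSet E S ↔ indepE (Finset.image E Finset.univ) S := by
    intro S
    constructor
    · intro h e he
      obtain ⟨m, _, rfl⟩ := Finset.mem_image.mp he
      exact h m
    · intro h m
      exact h (E m) (Finset.mem_image_of_mem E (Finset.mem_univ m))
  unfold maxIndepER misE
  congr 1
  exact Finset.filter_congr (fun S _ => by rw [h S])

lemma expER_eq_mis (N k : ℕ) :
    expER N k (fun E => (maxIndepER E : ℝ))
      = (∑ E : Fin k → Fin N × Fin N, (misE (Finset.image E Finset.univ) : ℝ)) /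
          (((N : ℝ) * N) ^ k) := by
  unfold expER
  congr 1
  · exact Finset.sum_congr rfl fun E _ => by
      show (maxIndepER E : ℝ) = _
      rw [maxIndepER_eq]
  · simp only [Fintype.card_fun, Fintype.card_prod, Fintype.card_fin]
    push_cast
    ring

/-! ### Vertex blocks -/

def Lv (N₁ N₂ : ℕ) : Fin N₁ → Fin (N₁ + N₂) := Fin.castAdd N₂
def Rv (N₁ N₂ : ℕ) : Fin N₂ → Fin (N₁ + N₂) := Fin.natAdd N₁

lemma Lv_injective (N₁ N₂ : ℕ) : Function.Injective (Lv N₁ N₂) := fun a b h => by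
  have := congrArg Fin.val h
  simpa [Lv, Fin.ext_iff] using this

lemma Rv_injective (N₁ N₂ : ℕ) : Function.Injective (Rv N₁ N₂) := fun a b h => by
  have := congrArg Fin.val h
  simp only [Rv, Fin.coe_natAdd] at this
  exact Fin.ext (by omega)

lemma Lv_ne_Rv (N₁ N₂ : ℕ) (a : Fin N₁) (b : Fin N₂) : Lv N₁ N₂ a ≠ Rv N₁ N₂ b := by
  intro h
  have := congrArg Fin.val h
  simp only [Lv, Rv, Fin.coe_castAdd, Fin.coe_natAdd] at this
  omega

lemma misE_blocks (N₁ N₂ : ℕ) (P : Finset (Fin N₁ × Fin N₁)) (Q : Finset (Fin N₂ × Fin N₂)) :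
    misE (P.image (Prod.map (Lv N₁ N₂) (Lv N₁ N₂)) ∪
          Q.image (Prod.map (Rv N₁ N₂) (Rv N₁ N₂))) = misE P + misE Q := by
  set L := Lv N₁ N₂
  set R := Rv N₁ N₂
  apply le_antisymm
  · apply misE_le
    intro S hS
    set S₁ : Finset (Fin N₁) := Finset.univ.filter (fun a => L a ∈ S) with hS₁def
    set S₂ : Finset (Fin N₂) := Finset.univ.filter (fun b => R b ∈ S) with hS₂def
    have hcard : S.card = S₁.card + S₂.card := by
      have h1 : S.card = (Finset.univ.filter (fun v => v ∈ S)).card := by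
        congr 1; ext v; simp
      rw [h1, Finset.card_filter, Finset.card_filter, Finset.card_filter]
      rw [← Fintype.sum_equiv (finSumFinEquiv (m := N₁) (n := N₂))
        (fun x => if finSumFinEquiv x ∈ S then 1 else 0) (fun v => if v ∈ S then 1 else 0)
        (fun x => rfl)]
      rw [Fintype.sum_sum_type]
      simp [L, R, Lv, Rv]
      rw [Finset.card_filter, Finset.card_filter]
      congr 1 <;> refine Finset.sum_congr rfl fun x _ => ?_ <;> split_ifs <;> simp_all
    have hind₁ : indepE P S₁ := by
      intro e he hcon
      have h1 : L e.1 ∈ S := (Finset.mem_filter.mp hcon.1).2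
      have h2 : L e.2 ∈ S := (Finset.mem_filter.mp hcon.2).2
      exact hS (Prod.map L L e)
        (Finset.mem_union_left _ (Finset.mem_image_of_mem _ he)) ⟨h1, h2⟩
    have hind₂ : indepE Q S₂ := by
      intro e he hcon
      have h1 : R e.1 ∈ S := (Finset.mem_filter.mp hcon.1).2
      have h2 : R e.2 ∈ S := (Finset.mem_filter.mp hcon.2).2
      exact hS (Prod.map R R e)
        (Finset.mem_union_right _ (Finset.mem_image_of_mem _ he)) ⟨h1, h2⟩
    rw [hcard]
    exact Nat.add_le_add (le_misE hind₁) (le_misE hind₂)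
  · obtain ⟨S₁, hS₁, hc₁⟩ := exists_max P
    obtain ⟨S₂, hS₂, hc₂⟩ := exists_max Q
    have hdisj : Disjoint (S₁.image L) (S₂.image R) := by
      rw [Finset.disjoint_left]
      intro v hv1 hv2
      obtain ⟨a, _, rfl⟩ := Finset.mem_image.mp hv1
      obtain ⟨b, _, hb⟩ := Finset.mem_image.mp hv2
      exact Lv_ne_Rv N₁ N₂ a b hb.symm
    have hmemL : ∀ {a : Fin N₁}, L a ∈ S₁.image L ∪ S₂.image R → a ∈ S₁ := by
      intro a ha
      rcases Finset.mem_union.mp ha with h | h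
      · obtain ⟨a', ha', he⟩ := Finset.mem_image.mp h
        rwa [← Lv_injective N₁ N₂ he]
      · obtain ⟨b, _, he⟩ := Finset.mem_image.mp h
        exact absurd he.symm (Lv_ne_Rv N₁ N₂ a b)
    have hmemR : ∀ {b : Fin N₂}, R b ∈ S₁.image L ∪ S₂.image R → b ∈ S₂ := by
      intro b hb
      rcases Finset.mem_union.mp hb with h | h
      · obtain ⟨a, _, he⟩ := Finset.mem_image.mp h
        exact absurd he (Lv_ne_Rv N₁ N₂ a b)
      · obtain ⟨b', hb', he⟩ := Finset.mem_image.mp h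
        rwa [← Rv_injective N₁ N₂ he]
    have hind : indepE (P.image (Prod.map L L) ∪ Q.image (Prod.map R R))
        (S₁.image L ∪ S₂.image R) := by
      intro e he hcon
      rcases Finset.mem_union.mp he with h | h
      · obtain ⟨p, hp, rfl⟩ := Finset.mem_image.mp h
        exact hS₁ p hp ⟨hmemL hcon.1, hmemL hcon.2⟩
      · obtain ⟨q, hq, rfl⟩ := Finset.mem_image.mp h
        exact hS₂ q hq ⟨hmemR hcon.1, hmemR hcon.2⟩
    have := le_misE hind
    rwa [Finset.card_union_of_disjoint hdisj,
      Finset.card_image_of_injective _ (Lv_injective N₁ N₂),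
      Finset.card_image_of_injective _ (Rv_injective N₁ N₂), hc₁, hc₂] at this

lemma sum_fun_succ {X R : Type*} [Fintype X] [AddCommMonoid R] (M : ℕ)
    (t : (Fin (M + 1) → X) → R) :
    ∑ F : Fin (M + 1) → X, t F = ∑ x : X, ∑ F : Fin M → X, t (Fin.cons x F) := by
  rw [← Equiv.sum_comp (Fin.consEquiv (fun _ : Fin (M + 1) => X)) t, Fintype.sum_prod_type]
  rfl

lemma image_cons {X : Type*} [DecidableEq X] {M : ℕ} (x : X) (F : Fin M → X) :
    Finset.image (Fin.cons x F) Finset.univ = insert x (Finset.image F Finset.univ) := by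
  ext y
  simp only [Finset.mem_image, Finset.mem_univ, true_and, Finset.mem_insert]
  rw [Fin.exists_fin_succ]
  simp [Fin.cons_zero, Fin.cons_succ, eq_comm]

variable {α γ : Type*} [Fintype α] [DecidableEq α] [Fintype γ]

lemma telescope (ι : γ → α) (w : γ → ℝ) (hw : ∀ x, 0 ≤ w x)
    (g : Finset α → ℝ) (hcard : 0 < Fintype.card α)
    (key : ∀ A : Finset α,
      ∑ x : γ, w x * g (insert (ι x) A) ≤
        (∑ a : α, g (insert a A)) / (Fintype.card α : ℝ)) :
    ∀ (M : ℕ) (A : Finset α),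
      ∑ F : Fin M → γ, (∏ i, w (F i)) * g (A ∪ Finset.image (fun i => ι (F i)) Finset.univ)
        ≤ (∑ E : Fin M → α, g (A ∪ Finset.image E Finset.univ)) / (Fintype.card α : ℝ) ^ M := by
  have hK : (0 : ℝ) < (Fintype.card α : ℝ) := by exact_mod_cast hcard
  intro M
  induction M with
  | zero =>
      intro A
      simp
  | succ M ih =>
      intro A
      have step1 :
          ∑ F : Fin (M + 1) → γ,
              (∏ i, w (F i)) * g (A ∪ Finset.image (fun i => ι (F i)) Finset.univ)
            = ∑ x : γ, w x * ∑ F : Fin M → γ,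
                (∏ i, w (F i)) *
                  g ((insert (ι x) A) ∪ Finset.image (fun i => ι (F i)) Finset.univ) := by
        rw [sum_fun_succ]
        refine Finset.sum_congr rfl fun x _ => ?_
        rw [Finset.mul_sum]
        refine Finset.sum_congr rfl fun F _ => ?_
        have h1 : (fun i => ι ((Fin.cons x F : Fin (M+1) → γ) i)) = Fin.cons (ι x) (fun i => ι (F i)) := by
          funext i
          exact congrFun (Fin.comp_cons ι x F) i
        rw [h1, image_cons, Finset.union_insert, Finset.insert_union, Fin.prod_univ_succ]
        simp only [Fin.cons_zero, Fin.cons_succ]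
        ring
      have step2 :
          ∑ x : γ, w x * ∑ F : Fin M → γ,
              (∏ i, w (F i)) *
                g ((insert (ι x) A) ∪ Finset.image (fun i => ι (F i)) Finset.univ)
            ≤ ∑ x : γ, w x *
                ((∑ E : Fin M → α, g ((insert (ι x) A) ∪ Finset.image E Finset.univ)) /
                  (Fintype.card α : ℝ) ^ M) := by
        refine Finset.sum_le_sum fun x _ => ?_
        exact mul_le_mul_of_nonneg_left (ih (insert (ι x) A)) (hw x)
      have step3 :
          ∑ x : γ, w x *
              ((∑ E : Fin M → α, g ((insert (ι x) A) ∪ Finset.image E Finset.univ)) /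
                (Fintype.card α : ℝ) ^ M)
            = (∑ E : Fin M → α, ∑ x : γ,
                w x * g (insert (ι x) (A ∪ Finset.image E Finset.univ))) /
                  (Fintype.card α : ℝ) ^ M := by
        have h : ∀ x : γ,
            w x * ((∑ E : Fin M → α, g ((insert (ι x) A) ∪ Finset.image E Finset.univ)) /
              (Fintype.card α : ℝ) ^ M)
            = (∑ E : Fin M → α,
                w x * g (insert (ι x) (A ∪ Finset.image E Finset.univ))) /
                (Fintype.card α : ℝ) ^ M := by
          intro x
          rw [← mul_div_assoc]
          congr 1
          rw [Finset.mul_sum]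
          exact Finset.sum_congr rfl fun E _ => by rw [Finset.insert_union]
        calc ∑ x : γ, w x *
              ((∑ E : Fin M → α, g ((insert (ι x) A) ∪ Finset.image E Finset.univ)) /
                (Fintype.card α : ℝ) ^ M)
            = ∑ x : γ, (∑ E : Fin M → α,
                w x * g (insert (ι x) (A ∪ Finset.image E Finset.univ))) /
                (Fintype.card α : ℝ) ^ M := Finset.sum_congr rfl fun x _ => h x
          _ = (∑ x : γ, ∑ E : Fin M → α,
                w x * g (insert (ι x) (A ∪ Finset.image E Finset.univ))) /
                (Fintype.card α : ℝ) ^ M := by rw [Finset.sum_div]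
          _ = _ := by rw [Finset.sum_comm]
      have step4 :
          (∑ E : Fin M → α, ∑ x : γ,
              w x * g (insert (ι x) (A ∪ Finset.image E Finset.univ))) /
                (Fintype.card α : ℝ) ^ M
            ≤ (∑ E : Fin M → α,
                (∑ a : α, g (insert a (A ∪ Finset.image E Finset.univ))) /
                  (Fintype.card α : ℝ)) / (Fintype.card α : ℝ) ^ M := by
        apply div_le_div_of_nonneg_right ?_ (by positivity)
        · exact Finset.sum_le_sum fun E _ => key _
      have step5 :
          (∑ E : Fin M → α,
              (∑ a : α, g (insert a (A ∪ Finset.image E Finset.univ))) /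
                (Fintype.card α : ℝ)) / (Fintype.card α : ℝ) ^ M
            = (∑ E : Fin (M + 1) → α, g (A ∪ Finset.image E Finset.univ)) /
                (Fintype.card α : ℝ) ^ (M + 1) := by
        rw [sum_fun_succ (t := fun E => g (A ∪ Finset.image E Finset.univ))]
        rw [← Finset.sum_div, Finset.sum_comm]
        rw [div_div, pow_succ]
        congr 1
        · refine Finset.sum_congr rfl fun E _ => Finset.sum_congr rfl fun a _ => ?_
          rw [image_cons, Finset.union_insert]
        · ring
      calc _ = _ := step1
        _ ≤ _ := step2
        _ = _ := step3
        _ ≤ _ := step4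
        _ = _ := step5

section Split

variable {β₁ β₂ : Type*} [Fintype β₁] [Fintype β₂] [DecidableEq β₁]

noncomputable def leftSet {M : ℕ} (F : Fin M → β₁ ⊕ β₂) : Finset β₁ :=
  (Finset.image F Finset.univ).preimage Sum.inl Sum.inl_injective.injOn

lemma mem_leftSet {M : ℕ} {F : Fin M → β₁ ⊕ β₂} {b : β₁} :
    b ∈ leftSet F ↔ ∃ i, F i = Sum.inl b := by
  simp [leftSet, Finset.mem_preimage]

lemma leftSet_cons_inl {M : ℕ} (b : β₁) (F : Fin M → β₁ ⊕ β₂) :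
    leftSet (Fin.cons (Sum.inl b) F : Fin (M + 1) → β₁ ⊕ β₂) = insert b (leftSet F) := by
  ext y
  simp only [mem_leftSet, Finset.mem_insert]
  rw [Fin.exists_fin_succ]
  simp [Fin.cons_zero, Fin.cons_succ, eq_comm, mem_leftSet]

lemma leftSet_cons_inr {M : ℕ} (c : β₂) (F : Fin M → β₁ ⊕ β₂) :
    leftSet (Fin.cons (Sum.inr c) F : Fin (M + 1) → β₁ ⊕ β₂) = leftSet F := by
  ext y
  simp only [mem_leftSet]
  rw [Fin.exists_fin_succ]
  simp [Fin.cons_zero, Fin.cons_succ, mem_leftSet]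

lemma G_succ (f : Finset β₁ → ℝ) (m : ℕ) (A : Finset β₁) :
    ∑ E : Fin (m + 1) → β₁, f (A ∪ Finset.image E Finset.univ)
      = ∑ b : β₁, ∑ E : Fin m → β₁, f ((insert b A) ∪ Finset.image E Finset.univ) := by
  rw [sum_fun_succ]
  refine Finset.sum_congr rfl fun b _ => Finset.sum_congr rfl fun E _ => ?_
  rw [image_cons, Finset.union_insert, Finset.insert_union]

lemma choose_recurrence (w₁ q : ℝ) (M : ℕ) (u : ℕ → ℝ) :
    ∑ m ∈ Finset.range (M + 2), ((M + 1).choose m : ℝ) * w₁ ^ m * q ^ (M + 1 - m) * u m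
      = ∑ m ∈ Finset.range (M + 1), (M.choose m : ℝ) * w₁ ^ (m + 1) * q ^ (M - m) * u (m + 1)
        + ∑ m ∈ Finset.range (M + 1), (M.choose m : ℝ) * w₁ ^ m * q ^ (M + 1 - m) * u m := by
  rw [Finset.sum_range_succ'
    (fun m => ((M + 1).choose m : ℝ) * w₁ ^ m * q ^ (M + 1 - m) * u m) (M + 1)]
  rw [Finset.sum_range_succ'
    (fun m => (M.choose m : ℝ) * w₁ ^ m * q ^ (M + 1 - m) * u m) M]
  have h2 : ∑ m ∈ Finset.range M,
        (M.choose (m + 1) : ℝ) * w₁ ^ (m + 1) * q ^ (M + 1 - (m + 1)) * u (m + 1)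
      = ∑ m ∈ Finset.range (M + 1),
        (M.choose (m + 1) : ℝ) * w₁ ^ (m + 1) * q ^ (M + 1 - (m + 1)) * u (m + 1) := by
    rw [Finset.sum_range_succ]
    simp [Nat.choose_succ_self]
  rw [h2]
  have h3 : ∑ m ∈ Finset.range (M + 1),
        ((M + 1).choose (m + 1) : ℝ) * w₁ ^ (m + 1) * q ^ (M + 1 - (m + 1)) * u (m + 1)
      = ∑ m ∈ Finset.range (M + 1),
          ((M.choose m : ℝ) * w₁ ^ (m + 1) * q ^ (M - m) * u (m + 1)
            + (M.choose (m + 1) : ℝ) * w₁ ^ (m + 1) * q ^ (M + 1 - (m + 1)) * u (m + 1)) := by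
    refine Finset.sum_congr rfl fun m _ => ?_
    rw [Nat.choose_succ_succ, Nat.succ_sub_succ]
    push_cast
    ring
  rw [h3, Finset.sum_add_distrib]
  simp only [Nat.succ_sub_succ, Nat.choose_zero_right]
  ring

lemma split_sum (w₁ w₂ : ℝ) (f : Finset β₁ → ℝ) :
    ∀ (M : ℕ) (A : Finset β₁),
      ∑ F : Fin M → β₁ ⊕ β₂,
          (∏ i, Sum.elim (fun _ : β₁ => w₁) (fun _ : β₂ => w₂) (F i)) * f (A ∪ leftSet F)
        = ∑ m ∈ Finset.range (M + 1),
            (M.choose m : ℝ) * w₁ ^ m * (w₂ * (Fintype.card β₂ : ℝ)) ^ (M - m) *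
              ∑ E : Fin m → β₁, f (A ∪ Finset.image E Finset.univ) := by
  intro M
  induction M with
  | zero =>
      intro A
      simp [leftSet]
  | succ M ih =>
      intro A
      have hdec :
          ∑ F : Fin (M + 1) → β₁ ⊕ β₂,
              (∏ i, Sum.elim (fun _ : β₁ => w₁) (fun _ : β₂ => w₂) (F i)) * f (A ∪ leftSet F)
            = w₁ * ∑ b : β₁, (∑ F : Fin M → β₁ ⊕ β₂,
                (∏ i, Sum.elim (fun _ : β₁ => w₁) (fun _ : β₂ => w₂) (F i)) *
                  f ((insert b A) ∪ leftSet F))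
              + (w₂ * (Fintype.card β₂ : ℝ)) * ∑ F : Fin M → β₁ ⊕ β₂,
                (∏ i, Sum.elim (fun _ : β₁ => w₁) (fun _ : β₂ => w₂) (F i)) *
                  f (A ∪ leftSet F) := by
        rw [sum_fun_succ, Fintype.sum_sum_type]
        congr 1
        · rw [Finset.mul_sum]
          refine Finset.sum_congr rfl fun b _ => ?_
          rw [Finset.mul_sum]
          refine Finset.sum_congr rfl fun F _ => ?_
          rw [Fin.prod_univ_succ]
          simp only [Fin.cons_zero, Fin.cons_succ, Sum.elim_inl]
          rw [leftSet_cons_inl, Finset.union_insert, Finset.insert_union]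
          ring
        · have hconst : ∀ c : β₂, ∑ F : Fin M → β₁ ⊕ β₂,
              (∏ i, Sum.elim (fun _ : β₁ => w₁) (fun _ : β₂ => w₂)
                ((Fin.cons (Sum.inr c) F : Fin (M+1) → β₁ ⊕ β₂) i)) *
                f (A ∪ leftSet (Fin.cons (Sum.inr c) F : Fin (M+1) → β₁ ⊕ β₂))
              = w₂ * ∑ F : Fin M → β₁ ⊕ β₂,
                (∏ i, Sum.elim (fun _ : β₁ => w₁) (fun _ : β₂ => w₂) (F i)) *
                  f (A ∪ leftSet F) := by
            intro c
            rw [Finset.mul_sum]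
            refine Finset.sum_congr rfl fun F _ => ?_
            rw [Fin.prod_univ_succ]
            simp only [Fin.cons_zero, Fin.cons_succ, Sum.elim_inr]
            rw [leftSet_cons_inr]
            ring
          rw [Finset.sum_congr rfl fun c _ => hconst c, Finset.sum_const,
            Finset.card_univ, nsmul_eq_mul]
          ring
      rw [hdec, Finset.sum_congr rfl fun b (_ : b ∈ Finset.univ) => ih (insert b A), ih A]
      have hswap :
          ∑ b : β₁, ∑ m ∈ Finset.range (M + 1),
              (M.choose m : ℝ) * w₁ ^ m * (w₂ * (Fintype.card β₂ : ℝ)) ^ (M - m) *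
                ∑ E : Fin m → β₁, f ((insert b A) ∪ Finset.image E Finset.univ)
            = ∑ m ∈ Finset.range (M + 1),
              (M.choose m : ℝ) * w₁ ^ m * (w₂ * (Fintype.card β₂ : ℝ)) ^ (M - m) *
                ∑ E : Fin (m + 1) → β₁, f (A ∪ Finset.image E Finset.univ) := by
        rw [Finset.sum_comm]
        refine Finset.sum_congr rfl fun m _ => ?_
        rw [G_succ, Finset.mul_sum]
      rw [hswap]
      rw [choose_recurrence w₁ (w₂ * (Fintype.card β₂ : ℝ)) M
        (fun m => ∑ E : Fin m → β₁, f (A ∪ Finset.image E Finset.univ))]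
      rw [Finset.mul_sum, Finset.mul_sum]
      congr 1
      · refine Finset.sum_congr rfl fun m _ => ?_
        ring
      · refine Finset.sum_congr rfl fun m hm => ?_
        have hm' : m ≤ M := Nat.lt_succ_iff.mp (Finset.mem_range.mp hm)
        rw [show M + 1 - m = (M - m) + 1 from by omega, pow_succ]
        ring

end Split
lemma algebra_step (n₁ n₂ m t₁ t₂ : ℝ) (h₁ : 1 ≤ n₁) (h₂ : 1 ≤ n₂) :
    1 / ((n₁ + n₂) * n₁) * (n₁ * n₁ * m - t₁ * t₁)
      + 1 / ((n₁ + n₂) * n₂) * (n₂ * n₂ * m - t₂ * t₂)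
      ≤ ((n₁ + n₂) * (n₁ + n₂) * m - (t₁ + t₂) * (t₁ + t₂)) / ((n₁ + n₂) * (n₁ + n₂)) := by
  have hn₁ : 0 < n₁ := by linarith
  have hn₂ : 0 < n₂ := by linarith
  have hn : 0 < n₁ + n₂ := by linarith
  rw [one_div_mul_eq_div, one_div_mul_eq_div,
    div_add_div _ _ (by positivity) (by positivity), div_le_div_iff₀ (by positivity) (by positivity)]
  nlinarith [mul_nonneg (sq_nonneg (n₁ + n₂)) (sq_nonneg (n₂ * t₁ - n₁ * t₂)),
    sq_nonneg (n₂ * t₁ - n₁ * t₂), mul_pos hn₁ hn₂, mul_pos hn hn₁, mul_pos hn hn₂]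

section Key

variable (N₁ N₂ : ℕ)

lemma key_step (h₁ : 1 ≤ N₁) (h₂ : 1 ≤ N₂) (A : Finset (Fin (N₁ + N₂) × Fin (N₁ + N₂))) :
    ∑ x : (Fin N₁ × Fin N₁) ⊕ (Fin N₂ × Fin N₂),
        (Sum.elim (fun _ => 1 / ((((N₁ : ℝ)) + N₂) * N₁)) (fun _ => 1 / ((((N₁ : ℝ)) + N₂) * N₂)) x)
          * (misE (insert (Sum.elim (Prod.map (Lv N₁ N₂) (Lv N₁ N₂))
              (Prod.map (Rv N₁ N₂) (Rv N₁ N₂)) x) A) : ℝ)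
      ≤ (∑ e : Fin (N₁ + N₂) × Fin (N₁ + N₂), (misE (insert e A) : ℝ)) /
          (Fintype.card (Fin (N₁ + N₂) × Fin (N₁ + N₂)) : ℝ) := by
  classical
  set χ : Fin (N₁ + N₂) → ℝ := fun v => if v ∈ coreE A then (1 : ℝ) else 0 with hχ
  set m : ℝ := (misE A : ℝ)
  set T₁ : ℝ := ∑ a : Fin N₁, χ (Lv N₁ N₂ a)
  set T₂ : ℝ := ∑ b : Fin N₂, χ (Rv N₁ N₂ b)
  have hT : ∑ v : Fin (N₁ + N₂), χ v = T₁ + T₂ := by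
    rw [← Fintype.sum_equiv (finSumFinEquiv (m := N₁) (n := N₂))
      (fun x => χ (finSumFinEquiv x)) χ (fun _ => rfl), Fintype.sum_sum_type]
    simp [Lv, Rv, T₁, T₂]
  have hRHS : ∑ e : Fin (N₁ + N₂) × Fin (N₁ + N₂), (misE (insert e A) : ℝ)
      = ((N₁ : ℝ) + N₂) * ((N₁ : ℝ) + N₂) * m - (T₁ + T₂) * (T₁ + T₂) := by
    rw [Fintype.sum_prod_type]
    have h1 : ∀ u : Fin (N₁ + N₂), ∑ v : Fin (N₁ + N₂), (misE (insert (u, v) A) : ℝ)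
        = ((N₁ : ℝ) + N₂) * m - χ u * (T₁ + T₂) := by
      intro u
      have h2 : ∀ v : Fin (N₁ + N₂), (misE (insert (u, v) A) : ℝ) = m - χ u * χ v := by
        intro v; exact misE_insert_real A u v
      rw [Finset.sum_congr rfl fun v _ => h2 v, Finset.sum_sub_distrib, Finset.sum_const,
        ← Finset.mul_sum, hT]
      simp only [Finset.card_univ, Fintype.card_fin, nsmul_eq_mul]
      push_cast
      ring
    rw [Finset.sum_congr rfl fun u _ => h1 u, Finset.sum_sub_distrib, Finset.sum_const,
      ← Finset.sum_mul, hT]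
    simp only [Finset.card_univ, Fintype.card_fin, nsmul_eq_mul]
    push_cast
    ring
  have hL1 : ∑ p : Fin N₁ × Fin N₁,
      (misE (insert (Prod.map (Lv N₁ N₂) (Lv N₁ N₂) p) A) : ℝ)
      = (N₁ : ℝ) * (N₁ : ℝ) * m - T₁ * T₁ := by
    rw [Fintype.sum_prod_type]
    simp only [Prod.map_apply]
    have h2 : ∀ (a b : Fin N₁),
        (misE (insert (Lv N₁ N₂ a, Lv N₁ N₂ b) A) : ℝ) = m - χ (Lv N₁ N₂ a) * χ (Lv N₁ N₂ b) :=
      fun a b => misE_insert_real A _ _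
    rw [Finset.sum_congr rfl fun a _ => Finset.sum_congr rfl fun b _ => h2 a b]
    simp only [Finset.sum_sub_distrib, Finset.sum_const, Finset.card_univ, Fintype.card_fin,
      nsmul_eq_mul, ← Finset.mul_sum, ← Finset.sum_mul]
    push_cast
    ring
  have hL2 : ∑ p : Fin N₂ × Fin N₂,
      (misE (insert (Prod.map (Rv N₁ N₂) (Rv N₁ N₂) p) A) : ℝ)
      = (N₂ : ℝ) * (N₂ : ℝ) * m - T₂ * T₂ := by
    rw [Fintype.sum_prod_type]
    simp only [Prod.map_apply]
    have h2 : ∀ (a b : Fin N₂),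
        (misE (insert (Rv N₁ N₂ a, Rv N₁ N₂ b) A) : ℝ) = m - χ (Rv N₁ N₂ a) * χ (Rv N₁ N₂ b) :=
      fun a b => misE_insert_real A _ _
    rw [Finset.sum_congr rfl fun a _ => Finset.sum_congr rfl fun b _ => h2 a b]
    simp only [Finset.sum_sub_distrib, Finset.sum_const, Finset.card_univ, Fintype.card_fin,
      nsmul_eq_mul, ← Finset.mul_sum, ← Finset.sum_mul]
    push_cast
    ring
  rw [Fintype.sum_sum_type]
  simp only [Sum.elim_inl, Sum.elim_inr, ← Finset.mul_sum]
  rw [hL1, hL2, hRHS]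
  have hcard : (Fintype.card (Fin (N₁ + N₂) × Fin (N₁ + N₂)) : ℝ)
      = ((N₁ : ℝ) + N₂) * ((N₁ : ℝ) + N₂) := by
    simp [Fintype.card_prod]
  rw [hcard]
  exact algebra_step (N₁ : ℝ) (N₂ : ℝ) m T₁ T₂ (by exact_mod_cast h₁) (by exact_mod_cast h₂)

end Key

section Assembly

lemma mem_swap_leftSet {β₁ β₂ : Type*} [Fintype β₁] [Fintype β₂] [DecidableEq β₂] {M : ℕ}
    {F : Fin M → β₁ ⊕ β₂} {b : β₂} :
    b ∈ leftSet (fun i => Sum.swap (F i)) ↔ ∃ i, F i = Sum.inr b := by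
  rw [mem_leftSet]
  refine exists_congr fun i => ?_
  cases hF : F i <;> simp [hF]

lemma image_iota {M N₁ N₂ : ℕ} (F : Fin M → (Fin N₁ × Fin N₁) ⊕ (Fin N₂ × Fin N₂)) :
    Finset.image (fun i => Sum.elim (Prod.map (Lv N₁ N₂) (Lv N₁ N₂))
        (Prod.map (Rv N₁ N₂) (Rv N₁ N₂)) (F i)) Finset.univ
      = (leftSet F).image (Prod.map (Lv N₁ N₂) (Lv N₁ N₂))
        ∪ (leftSet (fun i => Sum.swap (F i))).image (Prod.map (Rv N₁ N₂) (Rv N₁ N₂)) := by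
  ext e
  simp only [Finset.mem_image, Finset.mem_union, Finset.mem_univ, true_and, mem_leftSet,
    mem_swap_leftSet]
  constructor
  · rintro ⟨i, rfl⟩
    rcases hFi : F i with p | q
    · exact Or.inl ⟨p, ⟨i, hFi⟩, rfl⟩
    · refine Or.inr ⟨q, ⟨i, ?_⟩, rfl⟩
      rw [hFi]
      rfl
  · rintro (⟨p, ⟨i, hFi⟩, rfl⟩ | ⟨q, ⟨i, hFi⟩, rfl⟩)
    · exact ⟨i, by rw [hFi]; rfl⟩
    · have hFi' : F i = Sum.inr q := by
        rcases h' : F i with a | a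
        · rw [h'] at hFi; simp at hFi
        · rw [h'] at hFi
          simp only [Sum.swap_inr, Sum.inl.injEq] at hFi
          rw [hFi]
      exact ⟨i, by rw [hFi']; rfl⟩

lemma final_algebra (n₁ n₂ C S₁ S₂ : ℝ) (m k : ℕ) (h₁ : 1 ≤ n₁) (h₂ : 1 ≤ n₂) :
    C * (n₁ / (n₁ + n₂)) ^ m * (1 - n₁ / (n₁ + n₂)) ^ k * (S₁ / ((n₁ * n₁) ^ m) + S₂ / ((n₂ * n₂) ^ k))
      = C * (1 / ((n₁ + n₂) * n₁)) ^ m * ((1 / ((n₁ + n₂) * n₂)) * (n₂ * n₂)) ^ k * S₁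
        + C * (1 / ((n₁ + n₂) * n₂)) ^ k * ((1 / ((n₁ + n₂) * n₁)) * (n₁ * n₁)) ^ m * S₂ := by
  have hn₁ : (0:ℝ) < n₁ := by linarith
  have hn₂ : (0:ℝ) < n₂ := by linarith
  have hn : (0:ℝ) < n₁ + n₂ := by linarith
  have h1θ : 1 - n₁ / (n₁ + n₂) = n₂ / (n₁ + n₂) := by field_simp; ring
  have e₁ : (1 / ((n₁ + n₂) * n₂)) * (n₂ * n₂) = n₂ / (n₁ + n₂) := by field_simp
  have e₂ : (1 / ((n₁ + n₂) * n₁)) * (n₁ * n₁) = n₁ / (n₁ + n₂) := by field_simp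
  have e₃ : (1 / ((n₁ + n₂) * n₁)) ^ m = (n₁ / (n₁ + n₂)) ^ m / ((n₁ * n₁) ^ m) := by
    rw [← div_pow]
    congr 1
    field_simp
  have e₄ : (1 / ((n₁ + n₂) * n₂)) ^ k = (n₂ / (n₁ + n₂)) ^ k / ((n₂ * n₂) ^ k) := by
    rw [← div_pow]
    congr 1
    field_simp
  rw [h1θ, e₁, e₂, e₃, e₄]
  have hp₁ : ((n₁ * n₁ : ℝ) ^ m) ≠ 0 := by positivity
  have hp₂ : ((n₂ * n₂ : ℝ) ^ k) ≠ 0 := by positivity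
  field_simp

end Assembly

end InterpAux

open Finset InterpAux in
/-- Interpolation inequality for independent sets: with `M₁ ~ Binomial(⌊cN⌋, N₁/N)` and
`M₂ = ⌊cN⌋ - M₁`, and `G(N₁, M₁), G(N₂, M₂)` conditionally independent Erdős–Rényi
multigraphs, `E[I(G(N,⌊cN⌋))] ≥ E[I(G(N₁,M₁))] + E[I(G(N₂,M₂))]`. -/
theorem indep_set_interpolation (c : ℝ) (hc : 0 < c) (N N₁ N₂ : ℕ)
    (h₁ : 1 ≤ N₁) (h₁' : N₁ ≤ N - 1) (h₂ : 1 ≤ N₂) (h₂' : N₂ ≤ N - 1)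
    (hsum : N₁ + N₂ = N) :
    expER N ⌊c * (N : ℝ)⌋₊ (fun E => (maxIndepER E : ℝ)) ≥
      ∑ m ∈ Finset.range (⌊c * (N : ℝ)⌋₊ + 1),
        binomW ⌊c * (N : ℝ)⌋₊ ((N₁ : ℝ) / (N : ℝ)) m *
          (expER N₁ m (fun E => (maxIndepER E : ℝ)) +
            expER N₂ (⌊c * (N : ℝ)⌋₊ - m) (fun E => (maxIndepER E : ℝ))) := by
  subst hsum
  rw [ge_iff_le]
  set M : ℕ := ⌊c * ((N₁ + N₂ : ℕ) : ℝ)⌋₊ with hM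
  have hn₁ : (1:ℝ) ≤ (N₁:ℝ) := by exact_mod_cast h₁
  have hn₂ : (1:ℝ) ≤ (N₂:ℝ) := by exact_mod_cast h₂
  have hNcast : ((N₁ + N₂ : ℕ) : ℝ) = (N₁:ℝ) + (N₂:ℝ) := by push_cast; ring
  have hc₁ : (Fintype.card (Fin N₁ × Fin N₁) : ℝ) = (N₁:ℝ) * N₁ := by
    simp [Fintype.card_prod]
  have hc₂ : (Fintype.card (Fin N₂ × Fin N₂) : ℝ) = (N₂:ℝ) * N₂ := by
    simp [Fintype.card_prod]
  have hw : ∀ x : (Fin N₁ × Fin N₁) ⊕ (Fin N₂ × Fin N₂),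
      0 ≤ Sum.elim (fun _ : Fin N₁ × Fin N₁ => 1 / (((N₁:ℝ) + N₂) * N₁))
          (fun _ : Fin N₂ × Fin N₂ => 1 / (((N₁:ℝ) + N₂) * N₂)) x := by
    intro x
    rcases x with p | p <;> simp only [Sum.elim_inl, Sum.elim_inr] <;> positivity
  have hcardpos : 0 < Fintype.card (Fin (N₁ + N₂) × Fin (N₁ + N₂)) := by
    simp only [Fintype.card_prod, Fintype.card_fin]
    exact Nat.mul_pos (by omega) (by omega)
  have htel := telescope
      (Sum.elim (Prod.map (Lv N₁ N₂) (Lv N₁ N₂)) (Prod.map (Rv N₁ N₂) (Rv N₁ N₂)))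
      (Sum.elim (fun _ : Fin N₁ × Fin N₁ => 1 / (((N₁:ℝ) + N₂) * N₁))
        (fun _ : Fin N₂ × Fin N₂ => 1 / (((N₁:ℝ) + N₂) * N₂)))
      hw (fun A => (misE A : ℝ)) hcardpos
      (fun A => key_step N₁ N₂ h₁ h₂ A) M ∅
  simp only [Finset.empty_union] at htel
  have hsplitpt : ∀ F : Fin M → (Fin N₁ × Fin N₁) ⊕ (Fin N₂ × Fin N₂),
      (misE (Finset.image (fun i => Sum.elim (Prod.map (Lv N₁ N₂) (Lv N₁ N₂))
          (Prod.map (Rv N₁ N₂) (Rv N₁ N₂)) (F i)) Finset.univ) : ℝ)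
        = (misE (leftSet F) : ℝ) + (misE (leftSet (fun i => Sum.swap (F i))) : ℝ) := by
    intro F
    rw [image_iota, misE_blocks]
    push_cast
    ring
  have hs1 := split_sum (β₁ := Fin N₁ × Fin N₁) (β₂ := Fin N₂ × Fin N₂)
      (1 / (((N₁:ℝ) + N₂) * N₁)) (1 / (((N₁:ℝ) + N₂) * N₂))
      (fun P => (misE P : ℝ)) M ∅
  simp only [Finset.empty_union] at hs1
  have hs2 := split_sum (β₁ := Fin N₂ × Fin N₂) (β₂ := Fin N₁ × Fin N₁)
      (1 / (((N₁:ℝ) + N₂) * N₂)) (1 / (((N₁:ℝ) + N₂) * N₁))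
      (fun P => (misE P : ℝ)) M ∅
  simp only [Finset.empty_union] at hs2
  have hswap : ∑ F : Fin M → (Fin N₁ × Fin N₁) ⊕ (Fin N₂ × Fin N₂),
      (∏ i, Sum.elim (fun _ : Fin N₁ × Fin N₁ => 1 / (((N₁:ℝ) + N₂) * N₁))
          (fun _ : Fin N₂ × Fin N₂ => 1 / (((N₁:ℝ) + N₂) * N₂)) (F i))
        * (misE (leftSet (fun i => Sum.swap (F i))) : ℝ)
      = ∑ F : Fin M → (Fin N₂ × Fin N₂) ⊕ (Fin N₁ × Fin N₁),
        (∏ i, Sum.elim (fun _ : Fin N₂ × Fin N₂ => 1 / (((N₁:ℝ) + N₂) * N₂))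
            (fun _ : Fin N₁ × Fin N₁ => 1 / (((N₁:ℝ) + N₂) * N₁)) (F i))
          * (misE (leftSet F) : ℝ) := by
    have hbij : Function.Bijective
        (fun (F : Fin M → (Fin N₁ × Fin N₁) ⊕ (Fin N₂ × Fin N₂)) (i : Fin M) =>
          Sum.swap (F i)) := by
      constructor
      · intro F G h
        funext i
        have h' : (F i).swap = (G i).swap := congrFun h i
        rw [← Sum.swap_swap (F i), h', Sum.swap_swap]
      · intro G
        exact ⟨fun i => Sum.swap (G i), funext fun i => Sum.swap_swap _⟩
    refine Fintype.sum_bijective _ hbij _ _ ?_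
    intro F
    congr 1
    exact Finset.prod_congr rfl fun i _ => by rcases hFi : F i with p | p <;> simp [hFi]
  have hbig : ∑ F : Fin M → (Fin N₁ × Fin N₁) ⊕ (Fin N₂ × Fin N₂),
      (∏ i, Sum.elim (fun _ : Fin N₁ × Fin N₁ => 1 / (((N₁:ℝ) + N₂) * N₁))
          (fun _ : Fin N₂ × Fin N₂ => 1 / (((N₁:ℝ) + N₂) * N₂)) (F i))
        * (misE (Finset.image (fun i => Sum.elim (Prod.map (Lv N₁ N₂) (Lv N₁ N₂))
            (Prod.map (Rv N₁ N₂) (Rv N₁ N₂)) (F i)) Finset.univ) : ℝ)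
      = ∑ m ∈ Finset.range (M + 1),
          binomW M ((N₁ : ℝ) / ((N₁ + N₂ : ℕ) : ℝ)) m *
            (expER N₁ m (fun E => (maxIndepER E : ℝ)) +
              expER N₂ (M - m) (fun E => (maxIndepER E : ℝ))) := by
    calc ∑ F : Fin M → (Fin N₁ × Fin N₁) ⊕ (Fin N₂ × Fin N₂),
        (∏ i, Sum.elim (fun _ : Fin N₁ × Fin N₁ => 1 / (((N₁:ℝ) + N₂) * N₁))
            (fun _ : Fin N₂ × Fin N₂ => 1 / (((N₁:ℝ) + N₂) * N₂)) (F i))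
          * (misE (Finset.image (fun i => Sum.elim (Prod.map (Lv N₁ N₂) (Lv N₁ N₂))
              (Prod.map (Rv N₁ N₂) (Rv N₁ N₂)) (F i)) Finset.univ) : ℝ)
        = ∑ F : Fin M → (Fin N₁ × Fin N₁) ⊕ (Fin N₂ × Fin N₂),
            ((∏ i, Sum.elim (fun _ : Fin N₁ × Fin N₁ => 1 / (((N₁:ℝ) + N₂) * N₁))
                (fun _ : Fin N₂ × Fin N₂ => 1 / (((N₁:ℝ) + N₂) * N₂)) (F i))
              * (misE (leftSet F) : ℝ)
            + (∏ i, Sum.elim (fun _ : Fin N₁ × Fin N₁ => 1 / (((N₁:ℝ) + N₂) * N₁))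
                (fun _ : Fin N₂ × Fin N₂ => 1 / (((N₁:ℝ) + N₂) * N₂)) (F i))
              * (misE (leftSet (fun i => Sum.swap (F i))) : ℝ)) := by
          refine Finset.sum_congr rfl fun F _ => ?_
          rw [hsplitpt F]
          ring
      _ = (∑ F : Fin M → (Fin N₁ × Fin N₁) ⊕ (Fin N₂ × Fin N₂),
            (∏ i, Sum.elim (fun _ : Fin N₁ × Fin N₁ => 1 / (((N₁:ℝ) + N₂) * N₁))
                (fun _ : Fin N₂ × Fin N₂ => 1 / (((N₁:ℝ) + N₂) * N₂)) (F i))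
              * (misE (leftSet F) : ℝ))
          + ∑ F : Fin M → (Fin N₁ × Fin N₁) ⊕ (Fin N₂ × Fin N₂),
            (∏ i, Sum.elim (fun _ : Fin N₁ × Fin N₁ => 1 / (((N₁:ℝ) + N₂) * N₁))
                (fun _ : Fin N₂ × Fin N₂ => 1 / (((N₁:ℝ) + N₂) * N₂)) (F i))
              * (misE (leftSet (fun i => Sum.swap (F i))) : ℝ) :=
          Finset.sum_add_distrib
      _ = (∑ m ∈ Finset.range (M + 1),
            (M.choose m : ℝ) * (1 / (((N₁:ℝ) + N₂) * N₁)) ^ m *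
              ((1 / (((N₁:ℝ) + N₂) * N₂)) * (Fintype.card (Fin N₂ × Fin N₂) : ℝ)) ^ (M - m) *
              ∑ E : Fin m → Fin N₁ × Fin N₁, (misE (Finset.image E Finset.univ) : ℝ))
          + ∑ m ∈ Finset.range (M + 1),
            (M.choose m : ℝ) * (1 / (((N₁:ℝ) + N₂) * N₂)) ^ m *
              ((1 / (((N₁:ℝ) + N₂) * N₁)) * (Fintype.card (Fin N₁ × Fin N₁) : ℝ)) ^ (M - m) *
              ∑ E : Fin m → Fin N₂ × Fin N₂, (misE (Finset.image E Finset.univ) : ℝ) := by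
          rw [hs1, hswap, hs2]
      _ = (∑ m ∈ Finset.range (M + 1),
            (M.choose m : ℝ) * (1 / (((N₁:ℝ) + N₂) * N₁)) ^ m *
              ((1 / (((N₁:ℝ) + N₂) * N₂)) * (Fintype.card (Fin N₂ × Fin N₂) : ℝ)) ^ (M - m) *
              ∑ E : Fin m → Fin N₁ × Fin N₁, (misE (Finset.image E Finset.univ) : ℝ))
          + ∑ m ∈ Finset.range (M + 1),
            (M.choose (M - m) : ℝ) * (1 / (((N₁:ℝ) + N₂) * N₂)) ^ (M - m) *
              ((1 / (((N₁:ℝ) + N₂) * N₁)) * (Fintype.card (Fin N₁ × Fin N₁) : ℝ)) ^ (M - (M - m)) *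
              ∑ E : Fin (M - m) → Fin N₂ × Fin N₂, (misE (Finset.image E Finset.univ) : ℝ) := by
          congr 1
          rw [← Finset.sum_range_reflect]
          rfl
      _ = ∑ m ∈ Finset.range (M + 1),
            ((M.choose m : ℝ) * (1 / (((N₁:ℝ) + N₂) * N₁)) ^ m *
              ((1 / (((N₁:ℝ) + N₂) * N₂)) * (Fintype.card (Fin N₂ × Fin N₂) : ℝ)) ^ (M - m) *
              ∑ E : Fin m → Fin N₁ × Fin N₁, (misE (Finset.image E Finset.univ) : ℝ)
            + (M.choose (M - m) : ℝ) * (1 / (((N₁:ℝ) + N₂) * N₂)) ^ (M - m) *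
              ((1 / (((N₁:ℝ) + N₂) * N₁)) * (Fintype.card (Fin N₁ × Fin N₁) : ℝ)) ^ (M - (M - m)) *
              ∑ E : Fin (M - m) → Fin N₂ × Fin N₂, (misE (Finset.image E Finset.univ) : ℝ)) :=
          Finset.sum_add_distrib.symm
      _ = ∑ m ∈ Finset.range (M + 1),
          binomW M ((N₁ : ℝ) / ((N₁ + N₂ : ℕ) : ℝ)) m *
            (expER N₁ m (fun E => (maxIndepER E : ℝ)) +
              expER N₂ (M - m) (fun E => (maxIndepER E : ℝ))) := by
          refine Finset.sum_congr rfl fun m hm => ?_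
          have hm' : m ≤ M := Nat.lt_succ_iff.mp (Finset.mem_range.mp hm)
          rw [expER_eq_mis N₁ m, expER_eq_mis N₂ (M - m)]
          rw [Nat.choose_symm hm', show M - (M - m) = m from by omega, hc₁, hc₂]
          show _ = (M.choose m : ℝ) * ((N₁:ℝ) / ((N₁ + N₂ : ℕ) : ℝ)) ^ m *
              (1 - (N₁:ℝ) / ((N₁ + N₂ : ℕ) : ℝ)) ^ (M - m) * _
          rw [hNcast]
          exact (final_algebra (N₁:ℝ) (N₂:ℝ) (M.choose m : ℝ) _ _ m (M - m) hn₁ hn₂).symm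
  calc ∑ m ∈ Finset.range (M + 1),
        binomW M ((N₁ : ℝ) / ((N₁ + N₂ : ℕ) : ℝ)) m *
          (expER N₁ m (fun E => (maxIndepER E : ℝ)) +
            expER N₂ (M - m) (fun E => (maxIndepER E : ℝ)))
      = ∑ F : Fin M → (Fin N₁ × Fin N₁) ⊕ (Fin N₂ × Fin N₂),
          (∏ i, Sum.elim (fun _ : Fin N₁ × Fin N₁ => 1 / (((N₁:ℝ) + N₂) * N₁))
              (fun _ : Fin N₂ × Fin N₂ => 1 / (((N₁:ℝ) + N₂) * N₂)) (F i))
            * (misE (Finset.image (fun i => Sum.elim (Prod.map (Lv N₁ N₂) (Lv N₁ N₂))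
                (Prod.map (Rv N₁ N₂) (Rv N₁ N₂)) (F i)) Finset.univ) : ℝ) := hbig.symm
    _ ≤ (∑ E : Fin M → Fin (N₁ + N₂) × Fin (N₁ + N₂),
          (misE (Finset.image E Finset.univ) : ℝ)) /
          (Fintype.card (Fin (N₁ + N₂) × Fin (N₁ + N₂)) : ℝ) ^ M := htel
    _ = expER (N₁ + N₂) M (fun E => (maxIndepER E : ℝ)) := by
        rw [expER_eq_mis]
        congr 1
        simp only [Fintype.card_prod, Fintype.card_fin]
        push_cast
        ring
end

section
/- Let G be a finite multigraph on [N] with Ising Hamiltonian H(x) = Σ_{i∈[N]} h(x_i) + Σ_{edges (i,j)} g(x_i, x_j) for x ∈ {0,1}^N, where h(1) = B, h(0) = −B for some B ∈ ℝ, and g(a,b) = −β if a = b, g(a,b) = β if a ≠ b, for some β > 0. Let H_0 > H_1 > ⋯ be the distinct values of {H(x) : x ∈ {0,1}^N}, let M be the largest index m with H_m ≥ H_0 − 2β (taking M to be the index of the smallest value if all values are ≥ H_0 − 2β), let C_m = {x : H(x) = H_m}, and for i, k ∈ [N] write i ∼_m k if x_i = x_k for every x ∈ C_0 ∪ ⋯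 ∪ C_m. Let G + e be the multigraph obtained by adding an edge e = (i,k), so H_{G+e}(x) = H(x) + g(x_i, x_k), and let H(G+e) = max_x H_{G+e}(x). Then: (1) if i ≁_0 k then H(G+e) = H_0 + β; (2) if i ∼_m k but i ≁_{m+1} k for some m ≤ M − 1, then H(G+e) = H_{m+1} + β; (3) if i ∼_m k for all m ≤ M, then H(G+e) = H_0 − β. -/
open scoped Classical

/-- The antiferromagnetic Ising Hamiltonian with parameters `β, B` of the multigraph on
`[N]` given by the edge list `edges`: node potentials `B` (spin `true`) and `-B` (spin
`false`), and edge potentials `-β` if the endpoint spins agree and `β` if they differ. -/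
noncomputable def isingHam (β B : ℝ) {N : ℕ} (edges : List (Fin N × Fin N))
    (x : Fin N → Bool) : ℝ :=
  (∑ i : Fin N, if x i then B else -B) +
    (edges.map (fun e => if x e.1 = x e.2 then -β else β)).sum

/-- `i ∼_m k`: the spins at `i` and `k` agree in every configuration whose Hamiltonian
value is one of the top `m + 1` values `Hvals 0 > Hvals 1 > ⋯ > Hvals m`. -/
def SimRel {N : ℕ} (Ham : (Fin N → Bool) → ℝ) (Hvals : ℕ → ℝ) (m : ℕ)
    (i k : Fin N) : Prop :=
  ∀ x : Fin N → Bool, (∃ m' ≤ m, Ham x = Hvals m') → x i = x k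

/-- Effect of adding one edge `e = (i,k)` on the Ising ground state value (Lemma 1 of the
paper): `Hvals 0 > Hvals 1 > ⋯ > Hvals L` enumerates the distinct values of the
Hamiltonian of `G`, and `M` is the largest index `m ≤ L` with `Hvals m ≥ Hvals 0 − 2β`.
Then the ground state value of `G + e` equals `Hvals 0 + β` if `i ≁₀ k`; equals
`Hvals (m+1) + β` if `i ∼_m k` but `i ≁_{m+1} k` for some `m ≤ M − 1`; and equals
`Hvals 0 − β` if `i ∼_m k` for all `m ≤ M`. -/
theorem ising_ground_state_add_edge (N : ℕ) (β B : ℝ) (hβ : 0 < β)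
    (edges : List (Fin N × Fin N))
    (L : ℕ) (Hvals : ℕ → ℝ)
    (hanti : ∀ m m' : ℕ, m < m' → m' ≤ L → Hvals m' < Hvals m)
    (hrange : Hvals '' Set.Iic L = Set.range (isingHam β B edges))
    (M : ℕ) (hML : M ≤ L)
    (hM : Hvals 0 - 2 * β ≤ Hvals M)
    (hMmax : ∀ m : ℕ, m ≤ L → Hvals 0 - 2 * β ≤ Hvals m → m ≤ M)
    (i k : Fin N) :
    (¬ SimRel (isingHam β B edges) Hvals 0 i k →
      (⨆ x : Fin N → Bool, isingHam β B (edges ++ [(i, k)]) x) = Hvals 0 + β) ∧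
    (∀ m : ℕ, m + 1 ≤ M →
      SimRel (isingHam β B edges) Hvals m i k →
      ¬ SimRel (isingHam β B edges) Hvals (m + 1) i k →
      (⨆ x : Fin N → Bool, isingHam β B (edges ++ [(i, k)]) x) = Hvals (m + 1) + β) ∧
    ((∀ m : ℕ, m ≤ M → SimRel (isingHam β B edges) Hvals m i k) →
      (⨆ x : Fin N → Bool, isingHam β B (edges ++ [(i, k)]) x) = Hvals 0 - β) := by

  set Ham := isingHam β B edges with hHam
  set F := isingHam β B (edges ++ [(i, k)]) with hF
  have hsplit : ∀ x : Fin N → Bool, F x = Ham x + (if x i = x k then -β else β) := by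
    intro x
    simp only [hF, hHam, isingHam, List.map_append, List.sum_append, List.map_cons,
      List.map_nil, List.sum_cons, List.sum_nil]
    ring
  have hbdd : BddAbove (Set.range F) := (Set.finite_range F).bddAbove
  have hsup_eq : ∀ c : ℝ, (∀ x, F x ≤ c) → (∃ x, F x = c) → (⨆ x, F x) = c := by
    rintro c hle ⟨x, hx⟩
    exact le_antisymm (ciSup_le hle) (hx ▸ le_ciSup hbdd x)
  have hmem : ∀ x : Fin N → Bool, ∃ m' ≤ L, Ham x = Hvals m' := by
    intro x
    have : Ham x ∈ Set.range Ham := ⟨x, rfl⟩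
    rw [← hrange] at this
    obtain ⟨m', hm', heq⟩ := this
    exact ⟨m', hm', heq.symm⟩
  have hdec : ∀ a b : ℕ, a ≤ b → b ≤ L → Hvals b ≤ Hvals a := by
    intro a b hab hbL
    rcases hab.lt_or_eq with h | h
    · exact (hanti a b h hbL).le
    · exact h ▸ le_rfl
  have hle0 : ∀ x, Ham x ≤ Hvals 0 := by
    intro x
    obtain ⟨m', hm', heq⟩ := hmem x
    exact heq ▸ hdec 0 m' (Nat.zero_le _) hm'
  have hex0 : ∃ x, Ham x = Hvals 0 := by
    have : Hvals 0 ∈ Hvals '' Set.Iic L := ⟨0, Nat.zero_le _, rfl⟩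
    rw [hrange] at this
    obtain ⟨x, hx⟩ := this
    exact ⟨x, hx⟩
  refine ⟨?_, ?_, ?_⟩
  · -- case 1
    intro hns
    simp only [SimRel, not_forall] at hns
    obtain ⟨x, ⟨m', hm', heq⟩, hne⟩ := hns
    interval_cases m'
    apply hsup_eq
    · intro y
      rw [hsplit y]
      have := hle0 y
      split <;> linarith
    · refine ⟨x, ?_⟩
      rw [hsplit x, heq, if_neg hne]
  · -- case 2
    intro m hm1M hsim hns
    simp only [SimRel, not_forall] at hns
    obtain ⟨x, ⟨m', hm', heq⟩, hne⟩ := hns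
    have hm'eq : m' = m + 1 := by
      rcases Nat.lt_or_ge m' (m + 1) with h | h
      · exact absurd (hsim x ⟨m', Nat.lt_succ_iff.mp h, heq⟩) hne
      · omega
    subst hm'eq
    have hm1L : m + 1 ≤ L := hm1M.trans hML
    have hMm1 : Hvals M ≤ Hvals (m + 1) := hdec (m + 1) M hm1M hML
    apply hsup_eq
    · intro y
      rw [hsplit y]
      by_cases h : y i = y k
      · rw [if_pos h]
        have := hle0 y
        linarith
      · rw [if_neg h]
        obtain ⟨m'', hm'', heq''⟩ := hmem y
        have hgt : m + 1 ≤ m'' := by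
          by_contra hc
          exact h (hsim y ⟨m'', by omega, heq''⟩)
        have := hdec (m + 1) m'' hgt hm''
        linarith [heq'' ▸ this]
    · refine ⟨x, ?_⟩
      rw [hsplit x, heq, if_neg hne]
  · -- case 3
    intro hall
    apply hsup_eq
    · intro y
      rw [hsplit y]
      by_cases h : y i = y k
      · rw [if_pos h]
        have := hle0 y
        linarith
      · rw [if_neg h]
        obtain ⟨m'', hm'', heq''⟩ := hmem y
        have hgt : M < m'' := by
          by_contra hc
          push_neg at hc
          exact h (hall m'' hc y ⟨m'', le_rfl, heq''⟩)
        have : ¬ (Hvals 0 - 2 * β ≤ Hvals m'') := fun hb => by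
          have := hMmax m'' hm'' hb; omega
        push_neg at this
        rw [heq'']
        linarith
    · obtain ⟨x, hx⟩ := hex0
      have hik : x i = x k := hall 0 (Nat.zero_le _) x ⟨0, le_rfl, hx⟩
      refine ⟨x, ?_⟩
      rw [hsplit x, hx, if_pos hik]
      ring
end

section
/- Fix an integer K ≥ 2. Let G_0 be a K-SAT instance on variable set [N] (a finite list of clauses, each given by K variable indices in [N] and a forbidden tuple in {0,1}^K), let H(G_0) be the maximum over assignments x ∈ {0,1}^N of the number of satisfied clauses, and let O* ⊆ [N] be the set of frozen variables, i.e., variables taking the same value in every assignment achieving H(G_0). Add one random clause e, with K variable indices drawn i.i.d. uniformly from [N] and forbidden tuple drawn uniformly from {0,1}^K, independently. Then H(G_0 + e) ∈ {H(G_0), H(G_0) + 1}, and P(H(G_0 + e) = H(G_0)) = 2^{−K} (|O*|/N)^K. -/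
open scoped Classical

/-- A clause of a `K`-SAT instance on variables `Fin N`: `K` variable indices together
with the forbidden tuple `a ∈ {0,1}^K`. -/
abbrev Clause (N K : ℕ) := (Fin K → Fin N) × (Fin K → Bool)

/-- The number of clauses of the list `cls` satisfied by the assignment `x`; clause `cl`
is satisfied iff the values of `x` on its variables differ from the forbidden tuple. -/
def numSat {N K : ℕ} (cls : List (Clause N K)) (x : Fin N → Bool) : ℕ :=
  cls.countP (fun cl => decide ((fun j => x (cl.1 j)) ≠ cl.2))

/-- The maximum number of simultaneously satisfiable clauses of the instance `cls`. -/
noncomputable def ksatVal {N K : ℕ} (cls : List (Clause N K)) : ℕ :=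
  Finset.sup (Finset.univ : Finset (Fin N → Bool)) (numSat cls)

/-- `O*`: the set of frozen variables, i.e. variables taking the same value in every
assignment achieving the optimum `ksatVal cls`. -/
noncomputable def frozenVars {N K : ℕ} (cls : List (Clause N K)) : Finset (Fin N) :=
  (Finset.univ : Finset (Fin N)).filter (fun i => ∀ x y : Fin N → Bool,
    numSat cls x = ksatVal cls → numSat cls y = ksatVal cls → x i = y i)

lemma numSat_append {N K : ℕ} (cls : List (Clause N K)) (e : Clause N K) (x : Fin N → Bool) :
    numSat (cls ++ [e]) x =
      numSat cls x + (if (fun j => x (e.1 j)) ≠ e.2 then 1 else 0) := by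
  simp [numSat, List.countP_append, List.countP_singleton]

lemma le_ksatVal {N K : ℕ} (cls : List (Clause N K)) (x : Fin N → Bool) :
    numSat cls x ≤ ksatVal cls :=
  Finset.le_sup (Finset.mem_univ x)

lemma ksatVal_le_add {N K : ℕ} (cls : List (Clause N K)) (e : Clause N K) :
    ksatVal cls ≤ ksatVal (cls ++ [e]) := by
  apply Finset.sup_le
  intro x _
  calc numSat cls x ≤ numSat (cls ++ [e]) x := by
        rw [numSat_append]; split <;> omega
    _ ≤ _ := le_ksatVal _ _

/-- Effect of adding one random clause `e` (indices i.i.d. uniform in `[N]`, forbidden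
tuple uniform in `{0,1}^K`, independent) to a `K`-SAT instance `G₀`:
`H(G₀ + e) ∈ {H(G₀), H(G₀) + 1}`, and `P(H(G₀ + e) = H(G₀)) = 2^{-K} (|O*|/N)^K`. -/
theorem ksat_add_clause (K : ℕ) (hK : 2 ≤ K) (N : ℕ) (cls : List (Clause N K)) :
    (∀ e : Clause N K,
      ksatVal (cls ++ [e]) = ksatVal cls ∨ ksatVal (cls ++ [e]) = ksatVal cls + 1) ∧
    ((((Finset.univ : Finset (Clause N K)).filter
          (fun e => ksatVal (cls ++ [e]) = ksatVal cls)).card : ℝ) /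
        (Fintype.card (Clause N K) : ℝ) =
      (2 : ℝ)⁻¹ ^ K * (((frozenVars cls).card : ℝ) / (N : ℝ)) ^ K) := by
  obtain ⟨x₀, -, hx₀⟩ := Finset.exists_mem_eq_sup (Finset.univ : Finset (Fin N → Bool))
    Finset.univ_nonempty (numSat cls)
  -- hx₀ : ksatVal cls = numSat cls x₀
  have hx₀' : numSat cls x₀ = ksatVal cls := hx₀.symm
  have part1 : ∀ e : Clause N K,
      ksatVal (cls ++ [e]) = ksatVal cls ∨ ksatVal (cls ++ [e]) = ksatVal cls + 1 := by
    intro e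
    have h1 := ksatVal_le_add cls e
    have h2 : ksatVal (cls ++ [e]) ≤ ksatVal cls + 1 := by
      apply Finset.sup_le
      intro x _
      have := le_ksatVal cls x
      rw [numSat_append]
      split <;> omega
    omega
  refine ⟨part1, ?_⟩
  -- characterization of the event
  have hchar : ∀ e : Clause N K,
      (ksatVal (cls ++ [e]) = ksatVal cls) ↔
      (∀ j, e.1 j ∈ frozenVars cls ∧ e.2 j = x₀ (e.1 j)) := by
    intro e
    constructor
    · intro h
      have hviol : ∀ x, numSat cls x = ksatVal cls → (fun j => x (e.1 j)) = e.2 := by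
        intro x hx
        by_contra hne
        have hval : numSat (cls ++ [e]) x = ksatVal cls + 1 := by
          rw [numSat_append, if_pos hne, hx]
        have := le_ksatVal (cls ++ [e]) x
        omega
      intro j
      refine ⟨?_, (congrFun (hviol x₀ hx₀') j).symm⟩
      simp only [frozenVars, Finset.mem_filter, Finset.mem_univ, true_and]
      intro x y hx hy
      have h1 := congrFun (hviol x hx) j
      have h2 := congrFun (hviol y hy) j
      rw [h1, h2]
    · intro h
      have hviol : ∀ x, numSat cls x = ksatVal cls → (fun j => x (e.1 j)) = e.2 := by
        intro x hx
        funext j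
        have hf := (h j).1
        simp only [frozenVars, Finset.mem_filter, Finset.mem_univ, true_and] at hf
        have := hf x x₀ hx hx₀'
        rw [this, ← (h j).2]
      have h2 : ksatVal (cls ++ [e]) ≤ ksatVal cls := by
        apply Finset.sup_le
        intro x _
        rw [numSat_append]
        rcases eq_or_lt_of_le (le_ksatVal cls x) with hx | hx
        · rw [if_neg (fun hc => hc (hviol x hx))]
          omega
        · split <;> omega
      exact le_antisymm h2 (ksatVal_le_add cls e)
  -- count the event
  have hfilter : (Finset.univ : Finset (Clause N K)).filter
        (fun e => ksatVal (cls ++ [e]) = ksatVal cls) =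
      (Finset.univ : Finset (Clause N K)).filter
        (fun e => ∀ j, e.1 j ∈ frozenVars cls ∧ e.2 j = x₀ (e.1 j)) := by
    apply Finset.filter_congr
    intro e _
    exact hchar e
  have hcount : ((Finset.univ : Finset (Clause N K)).filter
        (fun e => ksatVal (cls ++ [e]) = ksatVal cls)).card =
      (frozenVars cls).card ^ K := by
    rw [hfilter, ← Fintype.card_subtype]
    have E : {e : Clause N K // ∀ j, e.1 j ∈ frozenVars cls ∧ e.2 j = x₀ (e.1 j)} ≃
        (Fin K → {i // i ∈ frozenVars cls}) :=
      { toFun := fun e j => ⟨e.1.1 j, (e.2 j).1⟩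
        invFun := fun f => ⟨(fun j => (f j).1, fun j => x₀ (f j).1), fun j => ⟨(f j).2, rfl⟩⟩
        left_inv := by
          rintro ⟨⟨v, a⟩, h⟩
          apply Subtype.ext
          refine Prod.ext rfl ?_
          funext j
          exact ((h j).2).symm
        right_inv := fun f => rfl }
    rw [Fintype.card_congr E, Fintype.card_fun, Fintype.card_coe, Fintype.card_fin]
  have hcardC : (Fintype.card (Clause N K) : ℝ) = ((N : ℝ) ^ K) * (2 : ℝ) ^ K := by
    have : Fintype.card (Clause N K) = N ^ K * 2 ^ K := by
      simp [Clause, Fintype.card_fun]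
    rw [this]; push_cast; ring
  rw [hcount, hcardC]
  push_cast
  rw [div_pow, inv_pow, inv_mul_eq_div, div_div]
end

section
/- Let α ∈ (0,1), let C ≥ 0, and let (a_N)_{N≥1} be a sequence of nonnegative real numbers satisfying a_{N} ≥ a_{N_1} + a_{N_2} − C N^α for all N_1, N_2 ≥ 1 with N = N_1 + N_2. Then the sequence a_N / N converges in [0, +∞] as N → ∞ (i.e., lim_{N→∞} a_N/N exists as an extended nonnegative real; in particular, if a_N/N is bounded, it converges to a finite limit). -/
open Filter
open scoped ENNReal

/-- Modified super-additivity (Proposition in Appendix B): if a nonnegative sequence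
`a` satisfies `a (N₁ + N₂) ≥ a N₁ + a N₂ − C (N₁ + N₂)^α` for all `N₁, N₂ ≥ 1`, with
`α ∈ (0,1)` and `C ≥ 0`, then `a N / N` converges in `[0, +∞]` as `N → ∞`. -/
theorem near_superadditive_limit (α C : ℝ) (hα : α ∈ Set.Ioo (0 : ℝ) 1) (hC : 0 ≤ C)
    (a : ℕ → ℝ) (ha : ∀ N : ℕ, 0 ≤ a N)
    (hsup : ∀ N₁ N₂ : ℕ, 1 ≤ N₁ → 1 ≤ N₂ →
      a (N₁ + N₂) ≥ a N₁ + a N₂ - C * (((N₁ + N₂ : ℕ) : ℝ)) ^ α) :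
    ∃ l : ℝ≥0∞,
      Tendsto (fun N : ℕ => ENNReal.ofReal (a N / (N : ℝ))) atTop (nhds l) := by
  obtain ⟨hα0, hα1⟩ := hα
  set q : ℝ := (2 : ℝ) ^ (α - 1) with hqdef
  have hq0 : 0 < q := Real.rpow_pos_of_pos two_pos _
  have hq1 : q < 1 := Real.rpow_lt_one_of_one_lt_of_neg one_lt_two (by linarith)
  have h1q : (1 : ℝ) - q ≠ 0 := ne_of_gt (by linarith)
  have h2 : ∀ m : ℕ, (((2 : ℝ) ^ m)) ^ α = q ^ m * 2 ^ m := by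
    intro m
    rw [← Real.rpow_natCast (2:ℝ) m, ← Real.rpow_mul (by norm_num : (0:ℝ) ≤ 2),
      hqdef, ← Real.rpow_natCast ((2:ℝ) ^ (α - 1)) m,
      ← Real.rpow_mul (by norm_num : (0:ℝ) ≤ 2), ← Real.rpow_add two_pos]
    congr 1
    ring
  -- Lemma A
  have hA : ∀ n : ℕ, 1 ≤ n → ∀ k : ℕ,
      a (2 ^ k * n) ≥ 2 ^ k * a n - C * (q * (1 - q ^ k) / (1 - q)) * 2 ^ k * (n : ℝ) ^ α := by
    intro n hn
    intro k
    induction k with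
    | zero => simp
    | succ k IH =>
      have h1 : (1 : ℕ) ≤ 2 ^ k * n := Nat.one_le_iff_ne_zero.2 (by positivity)
      have hs := hsup (2 ^ k * n) (2 ^ k * n) h1 h1
      have heq : 2 ^ k * n + 2 ^ k * n = 2 ^ (k + 1) * n := by ring
      rw [heq] at hs
      have hcast : (((2 ^ (k + 1) * n : ℕ) : ℝ)) ^ α = q ^ (k+1) * 2 ^ (k+1) * (n : ℝ) ^ α := by
        push_cast
        rw [Real.mul_rpow (by positivity) (by positivity), h2 (k+1)]
      rw [hcast] at hs
      have hkey : C * (q * (1 - q ^ (k+1)) / (1 - q)) * 2 ^ (k+1) * (n : ℝ) ^ α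
          = 2 * (C * (q * (1 - q ^ k) / (1 - q)) * 2 ^ k * (n : ℝ) ^ α)
            + C * (q ^ (k+1) * 2 ^ (k+1) * (n : ℝ) ^ α) := by
        field_simp
        ring
      have hp : (2:ℝ) ^ (k+1) * a n = 2 * ((2:ℝ) ^ k * a n) := by ring
      linarith [hs, IH, hp]
  set D : ℝ := C * q / (1 - q) with hDdef
  have hD : 0 ≤ D := by
    apply div_nonneg (by positivity)
    linarith
  have hA' : ∀ n : ℕ, 1 ≤ n → ∀ k : ℕ,
      a (2 ^ k * n) ≥ 2 ^ k * a n - D * 2 ^ k * (n : ℝ) ^ α := by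
    intro n hn k
    have h := hA n hn k
    have hle : C * (q * (1 - q ^ k) / (1 - q)) ≤ D := by
      have hqk : 0 ≤ q ^ k := by positivity
      have e1 : C * (q * (1 - q ^ k) / (1 - q)) = C * (q * (1 - q ^ k)) / (1 - q) := by ring
      rw [hDdef, e1, div_le_div_iff₀ (by linarith) (by linarith)]
      nlinarith [mul_nonneg (mul_nonneg (mul_nonneg hC hq0.le) (by linarith : (0:ℝ) ≤ 1 - q)) hqk]
    have : C * (q * (1 - q ^ k) / (1 - q)) * 2 ^ k * (n : ℝ) ^ α
        ≤ D * 2 ^ k * (n : ℝ) ^ α := by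
      apply mul_le_mul_of_nonneg_right _ (Real.rpow_nonneg (Nat.cast_nonneg n) α)
      exact mul_le_mul_of_nonneg_right hle (by positivity)
    linarith
  -- the "good value" at scale n
  set G : ℕ → ℝ := fun n => max 0 (a n / n - D * (n : ℝ) ^ (α - 1)) with hGdef
  have hG0 : ∀ n, 0 ≤ G n := fun n => le_max_left _ _
  have hGle : ∀ n, a n / n - D * (n : ℝ) ^ (α - 1) ≤ G n := fun n => le_max_right _ _
  have hstar : ∀ n : ℕ, 1 ≤ n → ∀ k : ℕ,
      a (2 ^ k * n) ≥ ((2 ^ k * n : ℕ) : ℝ) * G n := by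
    intro n hn k
    have hnpos : (0:ℝ) < n := by exact_mod_cast hn
    rcases le_or_gt (a n / n - D * (n : ℝ) ^ (α - 1)) 0 with hneg | hpos
    · have : G n = 0 := max_eq_left hneg
      rw [this, mul_zero]
      exact ha _
    · have hGeq : G n = a n / n - D * (n : ℝ) ^ (α - 1) := max_eq_right hpos.le
      have hnα : (n : ℝ) ^ α = n * (n : ℝ) ^ (α - 1) := by
        nth_rewrite 1 [show α = 1 + (α - 1) by ring]
        rw [Real.rpow_add hnpos, Real.rpow_one]
      have h := hA' n hn k
      have hcast : ((2 ^ k * n : ℕ) : ℝ) = 2 ^ k * (n : ℝ) := by push_cast; ring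
      rw [hcast, hGeq]
      have : 2 ^ k * (n:ℝ) * (a n / n - D * (n:ℝ) ^ (α - 1))
          = 2 ^ k * a n - D * 2 ^ k * (n : ℝ) ^ α := by
        rw [hnα]
        field_simp
      linarith
  -- Lemma B: binary decomposition
  have hB : ∀ n : ℕ, 1 ≤ n → ∀ N : ℕ,
      a N ≥ ((N : ℝ) - n + 1) * G n
        - C * ((Nat.log 2 N + 1 : ℕ) : ℝ) * (N : ℝ) ^ α := by
    intro n hn N
    induction N using Nat.strong_induction_on with
    | _ N IH =>
      have hCN : 0 ≤ C * ((Nat.log 2 N + 1 : ℕ) : ℝ) * (N : ℝ) ^ α := by positivity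
      rcases lt_or_ge N n with hNn | hNn
      · -- N < n : RHS ≤ 0
        have h1 : ((N : ℝ) - n + 1) ≤ 0 := by
          have : (N : ℝ) + 1 ≤ n := by exact_mod_cast hNn
          linarith
        have : ((N : ℝ) - n + 1) * G n ≤ 0 := mul_nonpos_of_nonpos_of_nonneg h1 (hG0 n)
        linarith [ha N]
      · -- N ≥ n
        have hNpos : 1 ≤ N := le_trans hn hNn
        have hnpos : 0 < n := hn
        have hdiv1 : 1 ≤ N / n := (Nat.one_le_div_iff hnpos).2 hNn
        set k := Nat.log 2 (N / n) with hkdef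
        have hkn : 2 ^ k * n ≤ N := by
          have h1 : 2 ^ k ≤ N / n := Nat.pow_log_le_self 2 (by omega)
          exact (Nat.le_div_iff_mul_le hnpos).1 h1
        have hup : N < 2 ^ (k + 1) * n := by
          have h1 : N / n < 2 ^ (k + 1) := Nat.lt_pow_succ_log_self (by norm_num) _
          exact (Nat.div_lt_iff_lt_mul hnpos).1 h1
        set m := 2 ^ k * n with hmdef
        set r := N - m with hrdef
        have hmr : m + r = N := by omega
        have h2r : 2 * r < N := by
          have : 2 ^ (k+1) * n = 2 * m := by rw [hmdef]; ring
          omega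
        rcases Nat.eq_zero_or_pos r with hr0 | hr1
        · -- N = m
          have hNm : N = m := by omega
          have h := hstar n hn k
          rw [← hmdef, ← hNm] at h
          have h2 : ((N : ℝ) - n + 1) * G n ≤ (N : ℝ) * G n := by
            apply mul_le_mul_of_nonneg_right _ (hG0 n)
            have : (1:ℝ) ≤ (n:ℝ) := by exact_mod_cast hn
            linarith
          linarith
        · -- r ≥ 1
          have hm1 : 1 ≤ m := by omega
          have hs := hsup m r hm1 hr1
          rw [hmr] at hs
          have ham := hstar n hn k
          rw [← hmdef] at ham
          have har := IH r (by omega)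
          -- log bound
          have hlog : Nat.log 2 r + 1 ≤ Nat.log 2 N := by
            have h1 : Nat.log 2 (r * 2) = Nat.log 2 r + 1 :=
              Nat.log_mul_base (by norm_num) (by omega)
            have h2 : r * 2 ≤ N := by omega
            calc Nat.log 2 r + 1 = Nat.log 2 (r * 2) := h1.symm
              _ ≤ Nat.log 2 N := Nat.log_mono_right h2
          have hrα : (r : ℝ) ^ α ≤ (N : ℝ) ^ α :=
            Real.rpow_le_rpow (Nat.cast_nonneg r) (by exact_mod_cast (by omega : r ≤ N)) hα0.le
          have hcost : C * ((Nat.log 2 r + 1 : ℕ) : ℝ) * (r : ℝ) ^ α + C * (N : ℝ) ^ α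
              ≤ C * ((Nat.log 2 N + 1 : ℕ) : ℝ) * (N : ℝ) ^ α := by
            have h1 : C * ((Nat.log 2 r + 1 : ℕ) : ℝ) * (r : ℝ) ^ α
                ≤ C * ((Nat.log 2 N : ℕ) : ℝ) * (N : ℝ) ^ α := by
              apply mul_le_mul _ hrα (by positivity) (by positivity)
              apply mul_le_mul_of_nonneg_left _ hC
              exact_mod_cast hlog
            have h2 : C * ((Nat.log 2 N + 1 : ℕ) : ℝ) * (N : ℝ) ^ α
                = C * ((Nat.log 2 N : ℕ) : ℝ) * (N : ℝ) ^ α + C * (N : ℝ) ^ α := by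
              push_cast; ring
            linarith
          have hmcast : ((m : ℝ) + ((r : ℝ) - n + 1)) = ((N : ℝ) - n + 1) := by
            have : (m : ℝ) + r = N := by exact_mod_cast hmr
            linarith
          have hsum : (m : ℝ) * G n + ((r : ℝ) - n + 1) * G n = ((N : ℝ) - n + 1) * G n := by
            rw [← hmcast]; ring
          linarith
  -- log bound
  have hlogR : ∀ N : ℕ, 2 ≤ N → ((Nat.log 2 N + 1 : ℕ) : ℝ) ≤ 4 * Real.log N := by
    intro N hN
    have hN1 : (1:ℝ) ≤ N := by exact_mod_cast le_trans one_le_two hN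
    have hp : ((2:ℝ)) ^ (Nat.log 2 N) ≤ (N:ℝ) := by
      exact_mod_cast Nat.pow_log_le_self 2 (by omega)
    have hlog2 : (1:ℝ)/2 ≤ Real.log 2 := by
      have := Real.log_two_gt_d9; linarith
    have hlogN2 : Real.log 2 ≤ Real.log N := by
      apply Real.log_le_log (by norm_num)
      exact_mod_cast hN
    have h1 : (Nat.log 2 N : ℝ) * Real.log 2 ≤ Real.log N := by
      rw [← Real.log_pow]
      exact Real.log_le_log (by positivity) hp
    have hL0 : (0:ℝ) ≤ (Nat.log 2 N : ℝ) := Nat.cast_nonneg _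
    have h2 : (Nat.log 2 N : ℝ) ≤ 2 * Real.log N := by nlinarith
    have h3 : (1:ℝ) ≤ 2 * Real.log N := by nlinarith
    push_cast
    linarith
  -- the correction term tends to 0
  have hto0 : Tendsto (fun N : ℕ => C * ((Nat.log 2 N + 1 : ℕ) : ℝ) * (N : ℝ) ^ (α - 1))
      atTop (nhds 0) := by
    have hlo : Tendsto (fun x : ℝ => Real.log x / x ^ (1 - α)) atTop (nhds 0) :=
      (isLittleO_log_rpow_atTop (by linarith)).tendsto_div_nhds_zero
    have hnn : Tendsto (fun N : ℕ => Real.log N / (N : ℝ) ^ (1 - α)) atTop (nhds 0) :=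
      hlo.comp tendsto_natCast_atTop_atTop
    have hc : Tendsto (fun N : ℕ => 4 * C * (Real.log N / (N : ℝ) ^ (1 - α))) atTop (nhds 0) := by
      simpa using hnn.const_mul (4 * C)
    apply tendsto_of_tendsto_of_tendsto_of_le_of_le' tendsto_const_nhds hc
    · filter_upwards with N
      positivity
    · filter_upwards [eventually_ge_atTop 2] with N hN
      have hN0 : (0:ℝ) < N := by positivity
      have hneg : (N : ℝ) ^ (α - 1) = ((N : ℝ) ^ (1 - α))⁻¹ := by
        rw [show α - 1 = -(1 - α) by ring, Real.rpow_neg hN0.le]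
      have hb := hlogR N hN
      have hrp : (0:ℝ) ≤ (N : ℝ) ^ (α - 1) := Real.rpow_nonneg hN0.le _
      calc C * ((Nat.log 2 N + 1 : ℕ) : ℝ) * (N : ℝ) ^ (α - 1)
          ≤ C * (4 * Real.log N) * (N : ℝ) ^ (α - 1) := by
            apply mul_le_mul_of_nonneg_right _ hrp
            exact mul_le_mul_of_nonneg_left hb hC
        _ = 4 * C * (Real.log N / (N : ℝ) ^ (1 - α)) := by
            rw [hneg, div_eq_mul_inv]; ring
  -- main eventual lower bound
  have hmain : ∀ n : ℕ, 1 ≤ n → ∀ ε : ℝ, 0 < ε →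
      ∀ᶠ N : ℕ in atTop, G n - ε ≤ a N / N := by
    intro n hn ε hε
    have h1 : Tendsto (fun N : ℕ => ((n : ℝ) - 1) * G n / N) atTop (nhds 0) :=
      tendsto_const_div_atTop_nhds_zero_nat _
    have hsum : Tendsto (fun N : ℕ =>
        ((n : ℝ) - 1) * G n / N + C * ((Nat.log 2 N + 1 : ℕ) : ℝ) * (N : ℝ) ^ (α - 1))
        atTop (nhds 0) := by simpa using h1.add hto0
    have hev := hsum.eventually_lt_const hε
    filter_upwards [hev, eventually_ge_atTop 1] with N hN h1N
    have hNpos : (0:ℝ) < N := by exact_mod_cast h1N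
    have hbb := hB n hn N
    have hNα : (N : ℝ) ^ α = N * (N : ℝ) ^ (α - 1) := by
      nth_rewrite 1 [show α = 1 + (α - 1) by ring]
      rw [Real.rpow_add hNpos, Real.rpow_one]
    have h3 : ((N : ℝ) - n + 1) * G n - C * ((Nat.log 2 N + 1 : ℕ) : ℝ) * (N : ℝ) ^ α
        = N * (G n - (((n : ℝ) - 1) * G n / N
            + C * ((Nat.log 2 N + 1 : ℕ) : ℝ) * (N : ℝ) ^ (α - 1))) := by
      rw [hNα]
      field_simp
      ring
    have h4 : (G n - (((n : ℝ) - 1) * G n / N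
        + C * ((Nat.log 2 N + 1 : ℕ) : ℝ) * (N : ℝ) ^ (α - 1))) ≤ a N / N := by
      rw [le_div_iff₀ hNpos]
      calc _ = ((N : ℝ) - n + 1) * G n
            - C * ((Nat.log 2 N + 1 : ℕ) : ℝ) * (N : ℝ) ^ α := by rw [h3]; ring
        _ ≤ a N := hbb
    linarith
  -- ENNReal endgame
  set f : ℕ → ℝ≥0∞ := fun N => ENNReal.ofReal (a N / N) with hf
  have hliminf : ∀ n : ℕ, 1 ≤ n → ENNReal.ofReal (G n) ≤ Filter.liminf f atTop := by
    intro n hn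
    refine ENNReal.le_of_forall_pos_le_add fun ε hε _ => ?_
    have hev := hmain n hn ε (by exact_mod_cast hε)
    have h1 : ENNReal.ofReal (G n - ε) ≤ Filter.liminf f atTop := by
      refine le_liminf_of_le (by isBoundedDefault) ?_
      filter_upwards [hev] with N hN
      exact ENNReal.ofReal_le_ofReal hN
    calc ENNReal.ofReal (G n) = ENNReal.ofReal ((G n - ε) + ε) := by rw [sub_add_cancel]
      _ ≤ ENNReal.ofReal (G n - ε) + ENNReal.ofReal ε := ENNReal.ofReal_add_le
      _ ≤ Filter.liminf f atTop + ε := by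
          rw [ENNReal.ofReal_coe_nnreal]
          exact add_le_add_left h1 _
  have hf_ub : ∀ n : ℕ, 1 ≤ n →
      f n ≤ Filter.liminf f atTop + ENNReal.ofReal (D * (n : ℝ) ^ (α - 1)) := by
    intro n hn
    have h1 : a n / n ≤ G n + D * (n : ℝ) ^ (α - 1) := by
      have := hGle n; linarith
    calc f n ≤ ENNReal.ofReal (G n + D * (n : ℝ) ^ (α - 1)) := ENNReal.ofReal_le_ofReal h1
      _ ≤ ENNReal.ofReal (G n) + ENNReal.ofReal (D * (n : ℝ) ^ (α - 1)) := ENNReal.ofReal_add_le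
      _ ≤ Filter.liminf f atTop + ENNReal.ofReal (D * (n : ℝ) ^ (α - 1)) :=
          add_le_add_left (hliminf n hn) _
  have hD0 : Tendsto (fun n : ℕ => ENNReal.ofReal (D * (n : ℝ) ^ (α - 1))) atTop (nhds 0) := by
    have hr : Tendsto (fun n : ℕ => D * (n : ℝ) ^ (α - 1)) atTop (nhds 0) := by
      have h1 : Tendsto (fun x : ℝ => x ^ (-(1 - α))) atTop (nhds 0) :=
        tendsto_rpow_neg_atTop (by linarith)
      have h2 : Tendsto (fun n : ℕ => (n : ℝ) ^ (α - 1)) atTop (nhds 0) := by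
        have := h1.comp tendsto_natCast_atTop_atTop
        simpa [show -(1 - α) = α - 1 by ring, Function.comp_def] using this
      simpa using h2.const_mul D
    simpa using ENNReal.tendsto_ofReal hr
  have hlimsup_le : Filter.limsup f atTop ≤ Filter.liminf f atTop := by
    have hev : ∀ᶠ n : ℕ in atTop,
        f n ≤ Filter.liminf f atTop + ENNReal.ofReal (D * (n : ℝ) ^ (α - 1)) := by
      filter_upwards [eventually_ge_atTop 1] with n hn
      exact hf_ub n hn
    have h1 := limsup_le_limsup hev
    have h2 : Tendsto (fun n : ℕ =>
        Filter.liminf f atTop + ENNReal.ofReal (D * (n : ℝ) ^ (α - 1))) atTop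
        (nhds (Filter.liminf f atTop + 0)) := Tendsto.const_add _ hD0
    rw [add_zero] at h2
    rwa [h2.limsup_eq] at h1
  exact ⟨Filter.limsup f atTop,
    tendsto_of_liminf_eq_limsup (le_antisymm liminf_le_limsup hlimsup_le) rfl⟩
end
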